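/- Let (A,∘,[·,·]) be a Gel'fand-Dorfman bialgebra over K and Ω(A,V) = (l_V, r_V, f, ∗, ▷, h, {·,·}) an extending datum of A by a vector space V in which l_A, r_A and ◁ are the zero maps. Then Ω(A,V) is a GD extending structure (i.e. the products (a,x)∘(b,y) = (a∘b + l_V(x)b + r_V(y)a + f(x,y), x∗y) and [(a,x),(b,y)] = ([a,b] + x▷b − y▷a + h(x,y), {x,y}) make A×V a GD bialgebra) if and only if: ∘ makes A×V a Novikov algebra, [·,·] makes A×V a Lie algebra, (V,∗,{·,·}) is a GD bialgebra, and for all a,b ∈ A, x,y,z ∈ V: [a, r_V(x)b] − x▷(b∘a) + r_V(x)[b,a] + (x▷b)∘a + b∘(x▷a) = 0; [a, l_V(x)b] − [b, l_V(x)a] + (x▷a)∘b − (x▷b)∘a − l_V(x)[a,b] = 0; [a, f(x,y)] − (x∗y)▷a − y▷(l_V(x)a) + r_V(y)(x▷a) − h(x,y)∘a − l_V({x,y})a + l_V(x)(y▷a) = 0; x▷(r_V(y)a) − y▷(r_V(x)a) − r_V(y)(x▷a) + r_V(x)(y▷a) − a∘h(x,y) − r_V({x,y})a = 0; x▷f(y,z)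 + h(x, y∗z) − z▷f(y,x) − h(z, y∗x) + r_V(z)(h(y,x)) + f({y,x}, z) − r_V(x)(h(y,z)) − f({y,z}, x) − l_V(y)(h(x,z)) − f(y, {x,z}) = 0. Moreover, in this case A×{0} is an ideal of the resulting GD bialgebra A◇V (a Lie ideal for [·,·] and a two-sided ideal for ∘). -/

import Mathlib

namespace GDExt

def IsNovikov {M : Type*} [AddCommGroup M] (mul : M → M → M) : Prop :=
  (∀ a b c, mul (mul a b) c - mul a (mul b c) = mul (mul b a) c - mul b (mul a c)) ∧
  ∀ a b c, mul (mul a b) c = mul (mul a c) b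

def IsLieBracket {M : Type*} [AddCommGroup M] (br : M → M → M) : Prop :=
  (∀ a, br a a = 0) ∧ ∀ a b c, br a (br b c) = br (br a b) c + br b (br a c)

def IsGD {M : Type*} [AddCommGroup M] (mul br : M → M → M) : Prop :=
  IsNovikov mul ∧ IsLieBracket br ∧
  ∀ a b c, br a (mul b c) - br c (mul b a) + mul (br b a) c - mul (br b c) a - mul b (br a c) = 0

variable {K : Type*} [Field K]
variable {A V : Type*} [AddCommGroup A] [Module K A] [AddCommGroup V] [Module K V]

/-- First component bilinear product of the unified product `A ♮ V`. -/
def uniMul (circ : A →ₗ[K] A →ₗ[K] A) (lA rA : A →ₗ[K] Module.End K V)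
    (lV rV : V →ₗ[K] Module.End K A) (f : V →ₗ[K] V →ₗ[K] A)
    (st : V →ₗ[K] V →ₗ[K] V) : A × V → A × V → A × V :=
  fun p q =>
    (circ p.1 q.1 + lV p.2 q.1 + rV q.2 p.1 + f p.2 q.2,
     st p.2 q.2 + lA p.1 q.2 + rA q.1 p.2)

/-- Bracket of the unified product `A ♮ V`. -/
def uniBr (brk : A →ₗ[K] A →ₗ[K] A) (tl : V →ₗ[K] A →ₗ[K] V) (tr : V →ₗ[K] A →ₗ[K] A)
    (hm : V →ₗ[K] V →ₗ[K] A) (vbr : V →ₗ[K] V →ₗ[K] V) : A × V → A × V → A × V :=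
  fun p q =>
    (brk p.1 q.1 + tr p.2 q.1 - tr q.2 p.1 + hm p.2 q.2,
     vbr p.2 q.2 + tl p.2 q.1 - tl q.2 p.1)

end GDExt

namespace GDExt

section Aux

variable {K : Type*} [Field K]
variable {A V : Type*} [AddCommGroup A] [Module K A] [AddCommGroup V] [Module K V]
variable (circ brk : A →ₗ[K] A →ₗ[K] A) (lV rV : V →ₗ[K] Module.End K A)
  (f : V →ₗ[K] V →ₗ[K] A) (st : V →ₗ[K] V →ₗ[K] V)
  (tr : V →ₗ[K] A →ₗ[K] A) (hm : V →ₗ[K] V →ₗ[K] A) (vbr : V →ₗ[K] V →ₗ[K] V)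

/-- The GD-compatibility defect of the crossed product. -/
def cE (p q r : A × V) : A × V :=
  uniBr brk 0 tr hm vbr p (uniMul circ 0 0 lV rV f st q r)
  - uniBr brk 0 tr hm vbr r (uniMul circ 0 0 lV rV f st q p)
  + uniMul circ 0 0 lV rV f st (uniBr brk 0 tr hm vbr q p) r
  - uniMul circ 0 0 lV rV f st (uniBr brk 0 tr hm vbr q r) p
  - uniMul circ 0 0 lV rV f st q (uniBr brk 0 tr hm vbr p r)

lemma cE_eq (p q r : A × V) :
    cE circ brk lV rV f st tr hm vbr p q r =
    (  (brk p.1 (circ q.1 r.1) - brk r.1 (circ q.1 p.1) + circ (brk q.1 p.1) r.1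
          - circ (brk q.1 r.1) p.1 - circ q.1 (brk p.1 r.1))
     + (brk p.1 (rV r.2 q.1) - tr r.2 (circ q.1 p.1) + rV r.2 (brk q.1 p.1)
          + circ (tr r.2 q.1) p.1 + circ q.1 (tr r.2 p.1))
     + (brk p.1 (lV q.2 r.1) - brk r.1 (lV q.2 p.1) + circ (tr q.2 p.1) r.1
          - circ (tr q.2 r.1) p.1 - lV q.2 (brk p.1 r.1))
     - (brk r.1 (rV p.2 q.1) - tr p.2 (circ q.1 r.1) + rV p.2 (brk q.1 r.1)
          + circ (tr p.2 q.1) r.1 + circ q.1 (tr p.2 r.1))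
     + (brk p.1 (f q.2 r.2) - tr (st q.2 r.2) p.1 - tr r.2 (lV q.2 p.1)
          + rV r.2 (tr q.2 p.1) - circ (hm q.2 r.2) p.1 - lV (vbr q.2 r.2) p.1
          + lV q.2 (tr r.2 p.1))
     + (tr p.2 (rV r.2 q.1) - tr r.2 (rV p.2 q.1) - rV r.2 (tr p.2 q.1)
          + rV p.2 (tr r.2 q.1) - circ q.1 (hm p.2 r.2) - rV (vbr p.2 r.2) q.1)
     - (brk r.1 (f q.2 p.2) - tr (st q.2 p.2) r.1 - tr p.2 (lV q.2 r.1)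
          + rV p.2 (tr q.2 r.1) - circ (hm q.2 p.2) r.1 - lV (vbr q.2 p.2) r.1
          + lV q.2 (tr p.2 r.1))
     + (tr p.2 (f q.2 r.2) + hm p.2 (st q.2 r.2) - tr r.2 (f q.2 p.2)
          - hm r.2 (st q.2 p.2) + rV r.2 (hm q.2 p.2) + f (vbr q.2 p.2) r.2
          - rV p.2 (hm q.2 r.2) - f (vbr q.2 r.2) p.2 - lV q.2 (hm p.2 r.2)
          - f q.2 (vbr p.2 r.2)) ,
     vbr p.2 (st q.2 r.2) - vbr r.2 (st q.2 p.2) + st (vbr q.2 p.2) r.2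
       - st (vbr q.2 r.2) p.2 - st q.2 (vbr p.2 r.2) ) := by
  simp only [cE, uniMul, uniBr, LinearMap.zero_apply, add_zero, zero_add, sub_zero,
    map_add, map_sub, LinearMap.add_apply, LinearMap.sub_apply,
    Prod.mk_sub_mk, Prod.mk_add_mk, Prod.mk.injEq]
  constructor
  · abel_nf
  · trivial

end Aux

/-- crossed product `A ◇ V` (extending datum with trivial `l_A`, `r_A`, `◁`):
characterization of when it is a GD bialgebra, and in that case `A × {0}` is an ideal. -/
theorem crossed_product_isGD_iff
    {K A V : Type*} [Field K] [AddCommGroup A] [Module K A] [AddCommGroup V] [Module K V]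
    (circ brk : A →ₗ[K] A →ₗ[K] A)
    (hGD : IsGD (fun a b => circ a b) (fun a b => brk a b))
    (lV rV : V →ₗ[K] Module.End K A)
    (f : V →ₗ[K] V →ₗ[K] A) (st : V →ₗ[K] V →ₗ[K] V)
    (tr : V →ₗ[K] A →ₗ[K] A)
    (hm : V →ₗ[K] V →ₗ[K] A) (vbr : V →ₗ[K] V →ₗ[K] V) :
    (IsGD (uniMul circ (0 : A →ₗ[K] Module.End K V) (0 : A →ₗ[K] Module.End K V) lV rV f st)
        (uniBr brk (0 : V →ₗ[K] A →ₗ[K] V) tr hm vbr) ↔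
      (IsNovikov (uniMul circ (0 : A →ₗ[K] Module.End K V) (0 : A →ₗ[K] Module.End K V) lV rV f st) ∧
       IsLieBracket (uniBr brk (0 : V →ₗ[K] A →ₗ[K] V) tr hm vbr) ∧
       IsGD (fun x y => st x y) (fun x y => vbr x y) ∧
       (∀ (a b : A) (x : V),
          brk a (rV x b) - tr x (circ b a) + rV x (brk b a)
            + circ (tr x b) a + circ b (tr x a) = 0) ∧
       (∀ (a b : A) (x : V),
          brk a (lV x b) - brk b (lV x a) + circ (tr x a) b - circ (tr x b) a
            - lV x (brk a b) = 0) ∧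
       (∀ (a : A) (x y : V),
          brk a (f x y) - tr (st x y) a - tr y (lV x a) + rV y (tr x a)
            - circ (hm x y) a - lV (vbr x y) a + lV x (tr y a) = 0) ∧
       (∀ (a : A) (x y : V),
          tr x (rV y a) - tr y (rV x a) - rV y (tr x a) + rV x (tr y a)
            - circ a (hm x y) - rV (vbr x y) a = 0) ∧
       (∀ x y z : V,
          tr x (f y z) + hm x (st y z) - tr z (f y x) - hm z (st y x) + rV z (hm y x)
            + f (vbr y x) z - rV x (hm y z) - f (vbr y z) x - lV y (hm x z) - f y (vbr x z) = 0))) ∧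
    (IsGD (uniMul circ (0 : A →ₗ[K] Module.End K V) (0 : A →ₗ[K] Module.End K V) lV rV f st)
        (uniBr brk (0 : V →ₗ[K] A →ₗ[K] V) tr hm vbr) →
      ∀ (a : A) (q : A × V),
        (uniMul circ (0 : A →ₗ[K] Module.End K V) (0 : A →ₗ[K] Module.End K V) lV rV f st (a, 0) q).2 = 0 ∧
        (uniMul circ (0 : A →ₗ[K] Module.End K V) (0 : A →ₗ[K] Module.End K V) lV rV f st q (a, 0)).2 = 0 ∧
        (uniBr brk (0 : V →ₗ[K] A →ₗ[K] V) tr hm vbr (a, 0) q).2 = 0 ∧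
        (uniBr brk (0 : V →ₗ[K] A →ₗ[K] V) tr hm vbr q (a, 0)).2 = 0) := by
  have hA : ∀ a b c : A, brk a (circ b c) - brk c (circ b a) + circ (brk b a) c
      - circ (brk b c) a - circ b (brk a c) = 0 := hGD.2.2
  constructor
  · constructor
    · rintro ⟨hNov, hLie, hC⟩
      have hC' : ∀ p q r : A × V, cE circ brk lV rV f st tr hm vbr p q r = 0 := hC
      refine ⟨hNov, hLie, ⟨⟨?_, ?_⟩, ⟨?_, ?_⟩, ?_⟩, ?_, ?_, ?_, ?_, ?_⟩
      · intro x y z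
        have h1 := congrArg Prod.snd (hNov.1 ((0 : A), x) (0, y) (0, z))
        simpa [uniMul] using h1
      · intro x y z
        have h1 := congrArg Prod.snd (hNov.2 ((0 : A), x) (0, y) (0, z))
        simpa [uniMul] using h1
      · intro x
        have h1 := congrArg Prod.snd (hLie.1 ((0 : A), x))
        simpa [uniBr] using h1
      · intro x y z
        have h1 := congrArg Prod.snd (hLie.2 ((0 : A), x) (0, y) (0, z))
        simpa [uniBr] using h1
      · intro x y z
        have h1 : cE circ brk lV rV f st tr hm vbr (0, x) (0, y) (0, z) = 0 := hC' _ _ _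
        rw [cE_eq] at h1
        have h2 := congrArg Prod.snd h1
        simpa using h2
      · intro a b x
        have h1 : cE circ brk lV rV f st tr hm vbr (a, 0) (b, 0) ((0 : A), x) = 0 := hC' _ _ _
        rw [cE_eq] at h1
        have h2 := congrArg Prod.fst h1
        simpa using h2
      · intro a b x
        have h1 : cE circ brk lV rV f st tr hm vbr (a, 0) ((0 : A), x) (b, 0) = 0 := hC' _ _ _
        rw [cE_eq] at h1
        have h2 := congrArg Prod.fst h1
        simpa using h2
      · intro a x y
        have h1 : cE circ brk lV rV f st tr hm vbr (a, 0) ((0 : A), x) ((0 : A), y) = 0 := hC' _ _ _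
        rw [cE_eq] at h1
        have h2 := congrArg Prod.fst h1
        simpa using h2
      · intro a x y
        have h1 : cE circ brk lV rV f st tr hm vbr ((0 : A), x) (a, 0) ((0 : A), y) = 0 := hC' _ _ _
        rw [cE_eq] at h1
        have h2 := congrArg Prod.fst h1
        simpa using h2
      · intro x y z
        have h1 : cE circ brk lV rV f st tr hm vbr ((0 : A), x) ((0 : A), y) ((0 : A), z) = 0 := hC' _ _ _
        rw [cE_eq] at h1
        have h2 := congrArg Prod.fst h1
        simpa using h2
    · rintro ⟨hNov, hLie, hVGD, hc1, hc2, hc3, hc4, hc5⟩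
      have hV : ∀ x y z : V, vbr x (st y z) - vbr z (st y x) + st (vbr y x) z
          - st (vbr y z) x - st y (vbr x z) = 0 := hVGD.2.2
      refine ⟨hNov, hLie, ?_⟩
      intro p q r
      have e : cE circ brk lV rV f st tr hm vbr p q r = 0 := by
        rw [cE_eq]
        rw [hA p.1 q.1 r.1, hc1 p.1 q.1 r.2, hc2 p.1 r.1 q.2, hc1 r.1 q.1 p.2,
            hc3 p.1 q.2 r.2, hc4 q.1 p.2 r.2, hc3 r.1 q.2 p.2, hc5 p.2 q.2 r.2,
            hV p.2 q.2 r.2]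
        simp
      exact e
  · intro _ a q
    refine ⟨?_, ?_, ?_, ?_⟩ <;> simp [uniMul, uniBr]

end GDExt
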